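/- There exists a universal constant C > 0 with the following property. For every dimension d ≥ 1, every pair of probability measures Q and R on ℝ^d, every K > 0, and every β ∈ ℝ^d with ‖β‖₂ ≤ 1 such that ∫ exp(⟨β,x⟩²/K²) dQ(x) ≤ 2 and ∫ exp(⟨β,x⟩²/K²) dR(x) ≤ 2, if δ := ‖Q − R‖_TV satisfies 0 < δ ≤ 1/2, then |∫⟨β,x⟩ dQ(x) − ∫⟨β,x⟩ dR(x)| ≤ C·K·δ·√(log(1/δ)). -/

import Mathlib

open MeasureTheory
open scoped RealInnerProductSpace ENNReal

/-- The total variation norm of a finite signed measure: the total mass of its total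
variation measure. -/
noncomputable def tvNorm {X : Type*} [MeasurableSpace X]
    (s : MeasureTheory.SignedMeasure X) : ℝ :=
  (s.totalVariation Set.univ).toReal

/-- Pointwise sub-gaussian domination: `|t| ≤ K e^{t²/(2K²)}`. -/
lemma aux_abs_le {K : ℝ} (hK : 0 < K) (t : ℝ) :
    |t| ≤ K * Real.exp (t ^ 2 / (2 * K ^ 2)) := by
  have hu : |t| / K ≤ Real.exp ((|t| / K) ^ 2 / 2) := by
    have h1 : (|t| / K) ^ 2 / 2 + 1 ≤ Real.exp ((|t| / K) ^ 2 / 2) :=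
      Real.add_one_le_exp _
    nlinarith [sq_nonneg (|t| / K - 1)]
  have heq : (|t| / K) ^ 2 / 2 = t ^ 2 / (2 * K ^ 2) := by
    rw [div_pow, sq_abs]; ring
  rw [heq] at hu
  calc |t| = K * (|t| / K) := by field_simp
    _ ≤ K * Real.exp (t ^ 2 / (2 * K ^ 2)) := by
        exact mul_le_mul_of_nonneg_left hu hK.le

/-- Tail domination. -/
lemma aux_tail_le {K M : ℝ} (hK : 0 < K) (hM : 0 ≤ M) (t : ℝ) (ht : M < |t|) :
    |t| ≤ K * Real.exp (-(M ^ 2 / (2 * K ^ 2))) * Real.exp (t ^ 2 / K ^ 2) := by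
  have h1 := aux_abs_le hK t
  have h2 : t ^ 2 / (2 * K ^ 2) ≤ -(M ^ 2 / (2 * K ^ 2)) + t ^ 2 / K ^ 2 := by
    have hMt : M ^ 2 ≤ t ^ 2 := by
      have := abs_nonneg t
      nlinarith [sq_abs t]
    have hK2 : (0:ℝ) < K ^ 2 := by positivity
    have key : -(M ^ 2 / (2 * K ^ 2)) + t ^ 2 / K ^ 2 - t ^ 2 / (2 * K ^ 2)
        = (t ^ 2 - M ^ 2) / (2 * K ^ 2) := by
      field_simp; ring
    have hnn : (0:ℝ) ≤ (t ^ 2 - M ^ 2) / (2 * K ^ 2) :=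
      div_nonneg (sub_nonneg.mpr hMt) (by positivity)
    linarith
  calc |t| ≤ K * Real.exp (t ^ 2 / (2 * K ^ 2)) := h1
    _ ≤ K * (Real.exp (-(M ^ 2 / (2 * K ^ 2))) * Real.exp (t ^ 2 / K ^ 2)) := by
        rw [← Real.exp_add]
        exact mul_le_mul_of_nonneg_left (Real.exp_le_exp.mpr h2) hK.le
    _ = K * Real.exp (-(M ^ 2 / (2 * K ^ 2))) * Real.exp (t ^ 2 / K ^ 2) := by ring

/-- Integrability of the exponential moment from a lintegral bound. -/
lemma aux_exp_integrable {X : Type*} [MeasurableSpace X] (μ : Measure X)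
    (f : X → ℝ) (hf : Measurable f) (K : ℝ)
    (hexp : (∫⁻ x, ENNReal.ofReal (Real.exp (f x ^ 2 / K ^ 2)) ∂μ) ≤ 2) :
    Integrable (fun x => Real.exp (f x ^ 2 / K ^ 2)) μ := by
  have hm : Measurable fun x => Real.exp (f x ^ 2 / K ^ 2) :=
    Real.measurable_exp.comp ((hf.pow_const 2).div_const _)
  refine ⟨hm.aestronglyMeasurable, ?_⟩
  rw [hasFiniteIntegral_iff_ofReal (Filter.Eventually.of_forall fun x => (Real.exp_pos _).le)]
  exact lt_of_le_of_lt hexp (by norm_num)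

/-- The exponential moment bound transfers to the Bochner integral. -/
lemma aux_exp_integral_le {X : Type*} [MeasurableSpace X] (μ : Measure X)
    (f : X → ℝ) (hf : Measurable f) (K : ℝ)
    (hexp : (∫⁻ x, ENNReal.ofReal (Real.exp (f x ^ 2 / K ^ 2)) ∂μ) ≤ 2) :
    (∫ x, Real.exp (f x ^ 2 / K ^ 2) ∂μ) ≤ 2 := by
  have hm : Measurable fun x => Real.exp (f x ^ 2 / K ^ 2) :=
    Real.measurable_exp.comp ((hf.pow_const 2).div_const _)
  rw [integral_eq_lintegral_of_nonneg_ae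
      (Filter.Eventually.of_forall fun x => (Real.exp_pos _).le) hm.aestronglyMeasurable]
  exact ENNReal.toReal_le_of_le_ofReal (by norm_num) (by simpa using hexp)

/-- Integrability of `f` itself from the exponential moment bound. -/
lemma aux_f_integrable {X : Type*} [MeasurableSpace X] (μ : Measure X)
    (f : X → ℝ) (hf : Measurable f) {K : ℝ} (hK : 0 < K)
    (hexp : (∫⁻ x, ENNReal.ofReal (Real.exp (f x ^ 2 / K ^ 2)) ∂μ) ≤ 2) :
    Integrable f μ := by
  refine ((aux_exp_integrable μ f hf K hexp).const_mul K).mono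
    hf.aestronglyMeasurable (Filter.Eventually.of_forall fun x => ?_)
  have h1 := aux_abs_le hK (f x)
  have h2 : f x ^ 2 / (2 * K ^ 2) ≤ f x ^ 2 / K ^ 2 := by
    apply div_le_div_of_nonneg_left (sq_nonneg _) (by positivity)
    nlinarith
  have h3 : Real.exp (f x ^ 2 / (2 * K ^ 2)) ≤ Real.exp (f x ^ 2 / K ^ 2) :=
    Real.exp_le_exp.mpr h2
  have h4 : (0:ℝ) < K * Real.exp (f x ^ 2 / K ^ 2) := by positivity
  calc ‖f x‖ = |f x| := rfl
    _ ≤ K * Real.exp (f x ^ 2 / (2 * K ^ 2)) := h1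
    _ ≤ K * Real.exp (f x ^ 2 / K ^ 2) := mul_le_mul_of_nonneg_left h3 hK.le
    _ ≤ ‖K * Real.exp (f x ^ 2 / K ^ 2)‖ := le_abs_self _

/-- Tail integral bound. -/
lemma aux_tail_integral {X : Type*} [MeasurableSpace X] (μ : Measure X)
    (f : X → ℝ) (hf : Measurable f) {K M : ℝ} (hK : 0 < K) (hM : 0 ≤ M)
    (hexp : (∫⁻ x, ENNReal.ofReal (Real.exp (f x ^ 2 / K ^ 2)) ∂μ) ≤ 2) :
    |∫ x, (if M < |f x| then f x else 0) ∂μ|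
      ≤ K * Real.exp (-(M ^ 2 / (2 * K ^ 2))) * 2 := by
  set c : ℝ := K * Real.exp (-(M ^ 2 / (2 * K ^ 2))) with hc
  have hc0 : 0 < c := by positivity
  set h : X → ℝ := fun x => if M < |f x| then f x else 0 with hh
  have hhm : Measurable h := Measurable.ite (measurableSet_lt measurable_const hf.abs)
    hf measurable_const
  have hbound : ∀ x, |h x| ≤ c * Real.exp (f x ^ 2 / K ^ 2) := by
    intro x
    by_cases hx : M < |f x|
    · simp only [hh, if_pos hx]
      exact aux_tail_le hK hM (f x) hx
    · simp only [hh, if_neg hx, abs_zero]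
      positivity
  have hexpint := aux_exp_integrable μ f hf K hexp
  have hhint : Integrable h μ := by
    refine (hexpint.const_mul c).mono hhm.aestronglyMeasurable
      (Filter.Eventually.of_forall fun x => ?_)
    calc ‖h x‖ = |h x| := rfl
      _ ≤ c * Real.exp (f x ^ 2 / K ^ 2) := hbound x
      _ ≤ ‖c * Real.exp (f x ^ 2 / K ^ 2)‖ := le_abs_self _
  calc |∫ x, h x ∂μ| ≤ ∫ x, |h x| ∂μ := by
        simpa [Real.norm_eq_abs] using norm_integral_le_integral_norm h
    _ ≤ ∫ x, c * Real.exp (f x ^ 2 / K ^ 2) ∂μ := by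
        refine integral_mono hhint.abs (hexpint.const_mul c)
          (fun x => hbound x)
    _ = c * ∫ x, Real.exp (f x ^ 2 / K ^ 2) ∂μ := integral_const_mul _ _
    _ ≤ c * 2 := mul_le_mul_of_nonneg_left
        (aux_exp_integral_le μ f hf K hexp) hc0.le

/-- Total-variation bound for bounded functions. -/
lemma aux_tv_bound {X : Type*} [MeasurableSpace X] (Q R : Measure X)
    [IsFiniteMeasure Q] [IsFiniteMeasure R] (g : X → ℝ) (hg : Measurable g)
    {Mb : ℝ} (hMb : 0 ≤ Mb) (hgb : ∀ x, |g x| ≤ Mb) :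
    |(∫ x, g x ∂Q) - ∫ x, g x ∂(R)|
      ≤ Mb * tvNorm (Q.toSignedMeasure - R.toSignedMeasure) := by
  set s := Q.toSignedMeasure - R.toSignedMeasure with hs
  set μp := s.toJordanDecomposition.posPart with hμp
  set μn := s.toJordanDecomposition.negPart with hμn
  have hQR : Q + μn = R + μp := by
    ext A hA
    have h1 : s A = (μp A).toReal - (μn A).toReal := by
      conv_lhs => rw [← s.toSignedMeasure_toJordanDecomposition]
      exact Measure.toSignedMeasure_sub_apply hA
    have h2 : s A = (Q A).toReal - (R A).toReal := Measure.toSignedMeasure_sub_apply hA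
    have h3 : (Q A).toReal + (μn A).toReal = (R A).toReal + (μp A).toReal := by
      rw [h1] at h2; linarith
    have h4 : ((Q + μn) A).toReal = ((R + μp) A).toReal := by
      simp only [Measure.add_apply, ENNReal.toReal_add (measure_ne_top _ _) (measure_ne_top _ _)]
      exact h3
    exact (ENNReal.toReal_eq_toReal_iff' (measure_ne_top _ _) (measure_ne_top _ _)).mp h4
  have hint : ∀ (μ : Measure X) [IsFiniteMeasure μ], Integrable g μ := by
    intro μ _
    refine (integrable_const Mb).mono hg.aestronglyMeasurable
      (Filter.Eventually.of_forall fun x => ?_)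
    calc ‖g x‖ = |g x| := rfl
      _ ≤ Mb := hgb x
      _ ≤ ‖Mb‖ := le_abs_self _
  have habs : ∀ (μ : Measure X) [IsFiniteMeasure μ],
      |∫ x, g x ∂μ| ≤ Mb * (μ Set.univ).toReal := by
    intro μ _
    calc |∫ x, g x ∂μ| ≤ ∫ x, |g x| ∂μ := by
          simpa [Real.norm_eq_abs] using norm_integral_le_integral_norm g
      _ ≤ ∫ _x, Mb ∂μ := integral_mono (hint μ).abs (integrable_const _) (fun x => hgb x)
      _ = (μ Set.univ).toReal • Mb := integral_const _
      _ = Mb * (μ Set.univ).toReal := by rw [smul_eq_mul]; ring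
  have hadd : (∫ x, g x ∂Q) + ∫ x, g x ∂μn = (∫ x, g x ∂(R)) + ∫ x, g x ∂μp := by
    rw [← integral_add_measure (hint Q) (hint μn), ← integral_add_measure (hint R) (hint μp),
      hQR]
  have htv : tvNorm s = (μp Set.univ).toReal + (μn Set.univ).toReal := by
    rw [tvNorm, SignedMeasure.totalVariation, Measure.add_apply,
      ENNReal.toReal_add (measure_ne_top _ _) (measure_ne_top _ _)]
  have hdiff : (∫ x, g x ∂Q) - ∫ x, g x ∂(R) = (∫ x, g x ∂μp) - ∫ x, g x ∂μn := by
    linarith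
  rw [hdiff, htv]
  calc |(∫ x, g x ∂μp) - ∫ x, g x ∂μn| ≤ |∫ x, g x ∂μp| + |∫ x, g x ∂μn| := abs_sub _ _
    _ ≤ Mb * (μp Set.univ).toReal + Mb * (μn Set.univ).toReal := add_le_add (habs μp) (habs μn)
    _ = Mb * ((μp Set.univ).toReal + (μn Set.univ).toReal) := by ring

theorem stmt_9 :
    ∃ C : ℝ, 0 < C ∧
      ∀ (d : ℕ), 1 ≤ d →
      ∀ (Q R : Measure (EuclideanSpace ℝ (Fin d)))
        [IsProbabilityMeasure Q] [IsProbabilityMeasure R],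
      ∀ K : ℝ, 0 < K →
      ∀ β : EuclideanSpace ℝ (Fin d), ‖β‖ ≤ 1 →
        (∫⁻ x, ENNReal.ofReal (Real.exp (⟪β, x⟫ ^ 2 / K ^ 2)) ∂Q) ≤ 2 →
        (∫⁻ x, ENNReal.ofReal (Real.exp (⟪β, x⟫ ^ 2 / K ^ 2)) ∂(R)) ≤ 2 →
        0 < tvNorm (Q.toSignedMeasure - R.toSignedMeasure) →
        tvNorm (Q.toSignedMeasure - R.toSignedMeasure) ≤ 1 / 2 →
        |(∫ x, ⟪β, x⟫ ∂Q) - ∫ x, ⟪β, x⟫ ∂(R)| ≤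
          C * K * tvNorm (Q.toSignedMeasure - R.toSignedMeasure) *
            Real.sqrt (Real.log (1 / tvNorm (Q.toSignedMeasure - R.toSignedMeasure))) := by
  refine ⟨10, by norm_num, ?_⟩
  intro d hd Q R hQp hRp K hK β hβ hQexp hRexp hδpos hδle
  set f : EuclideanSpace ℝ (Fin d) → ℝ := fun x => ⟪β, x⟫ with hf_def
  have hf : Measurable f := (continuous_const.inner continuous_id).measurable
  set δ := tvNorm (Q.toSignedMeasure - R.toSignedMeasure) with hδ_def
  set L := Real.log (1 / δ) with hL_def
  have hL2 : (1:ℝ)/2 ≤ L := by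
    have h2 : (2:ℝ) ≤ 1/δ := by
      rw [le_div_iff₀ hδpos]; linarith
    have hlog2 : (1:ℝ)/2 ≤ Real.log 2 := by
      have := Real.log_two_gt_d9; linarith
    calc (1:ℝ)/2 ≤ Real.log 2 := hlog2
      _ ≤ Real.log (1/δ) := Real.log_le_log (by norm_num) h2
  have hL0 : (0:ℝ) ≤ L := by linarith
  set M := K * Real.sqrt (2 * L) with hM_def
  have hM0 : 0 ≤ M := by positivity
  -- split f into bounded and tail parts
  set g : EuclideanSpace ℝ (Fin d) → ℝ := fun x => if M < |f x| then 0 else f x with hg_def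
  set h : EuclideanSpace ℝ (Fin d) → ℝ := fun x => if M < |f x| then f x else 0 with hh_def
  have hgh : ∀ x, f x = g x + h x := by
    intro x; by_cases hx : M < |f x| <;> simp [hg_def, hh_def, hx]
  have hgm : Measurable g := Measurable.ite (measurableSet_lt measurable_const hf.abs)
    measurable_const hf
  have hgb : ∀ x, |g x| ≤ M := by
    intro x; by_cases hx : M < |f x|
    · simp [hg_def, hx, hM0]
    · simp only [hg_def, if_neg hx]; exact le_of_not_gt hx
  -- integrabilities
  have hfQ : Integrable f Q := aux_f_integrable Q f hf hK hQexp
  have hfR : Integrable f R := aux_f_integrable R f hf hK hRexp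
  have hgQ : Integrable g Q := by
    refine (integrable_const M).mono hgm.aestronglyMeasurable
      (Filter.Eventually.of_forall fun x => ?_)
    calc ‖g x‖ = |g x| := rfl
      _ ≤ M := hgb x
      _ ≤ ‖M‖ := le_abs_self _
  have hgR : Integrable g R := by
    refine (integrable_const M).mono hgm.aestronglyMeasurable
      (Filter.Eventually.of_forall fun x => ?_)
    calc ‖g x‖ = |g x| := rfl
      _ ≤ M := hgb x
      _ ≤ ‖M‖ := le_abs_self _
  have hhQ : Integrable h Q := by
    have : h = fun x => f x - g x := by
      funext x; have := hgh x; linarith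
    rw [this]; exact hfQ.sub hgQ
  have hhR : Integrable h R := by
    have : h = fun x => f x - g x := by
      funext x; have := hgh x; linarith
    rw [this]; exact hfR.sub hgR
  -- decomposition of the integrals
  have hsplitQ : (∫ x, f x ∂Q) = (∫ x, g x ∂Q) + ∫ x, h x ∂Q := by
    rw [← integral_add hgQ hhQ]
    exact integral_congr_ae (Filter.Eventually.of_forall hgh)
  have hsplitR : (∫ x, f x ∂(R)) = (∫ x, g x ∂(R)) + ∫ x, h x ∂(R) := by
    rw [← integral_add hgR hhR]
    exact integral_congr_ae (Filter.Eventually.of_forall hgh)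
  -- bounded part
  have hbdd : |(∫ x, g x ∂Q) - ∫ x, g x ∂(R)| ≤ M * δ :=
    aux_tv_bound Q R g hgm hM0 hgb
  -- tail parts
  have hexpM : Real.exp (-(M ^ 2 / (2 * K ^ 2))) = δ := by
    have hMsq : M ^ 2 = K ^ 2 * (2 * L) := by
      rw [hM_def, mul_pow, Real.sq_sqrt (by linarith)]
    have : M ^ 2 / (2 * K ^ 2) = L := by
      rw [hMsq]; field_simp
    rw [this, hL_def, Real.exp_neg, Real.exp_log (by positivity), one_div, inv_inv]
  have htailQ : |∫ x, h x ∂Q| ≤ K * δ * 2 := by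
    have := aux_tail_integral Q f hf hK hM0 hQexp
    rwa [hexpM] at this
  have htailR : |∫ x, h x ∂(R)| ≤ K * δ * 2 := by
    have := aux_tail_integral R f hf hK hM0 hRexp
    rwa [hexpM] at this
  -- assemble
  have hmain : |(∫ x, f x ∂Q) - ∫ x, f x ∂(R)| ≤ M * δ + 4 * (K * δ) := by
    rw [hsplitQ, hsplitR]
    have h1 : (∫ x, g x ∂Q) + (∫ x, h x ∂Q) - ((∫ x, g x ∂(R)) + ∫ x, h x ∂(R))
        = ((∫ x, g x ∂Q) - ∫ x, g x ∂(R)) + ((∫ x, h x ∂Q) - ∫ x, h x ∂(R)) := by ring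
    rw [h1]
    calc |((∫ x, g x ∂Q) - ∫ x, g x ∂(R)) + ((∫ x, h x ∂Q) - ∫ x, h x ∂(R))|
        ≤ |(∫ x, g x ∂Q) - ∫ x, g x ∂(R)| + |(∫ x, h x ∂Q) - ∫ x, h x ∂(R)| := abs_add_le _ _
      _ ≤ M * δ + (|∫ x, h x ∂Q| + |∫ x, h x ∂(R)|) := add_le_add hbdd (abs_sub _ _)
      _ ≤ M * δ + (K * δ * 2 + K * δ * 2) := by linarith
      _ = M * δ + 4 * (K * δ) := by ring
  -- final numeric comparison
  have hfinal : M * δ + 4 * (K * δ) ≤ 10 * K * δ * Real.sqrt L := by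
    have hsL : Real.sqrt (2 * L) = Real.sqrt 2 * Real.sqrt L := Real.sqrt_mul (by norm_num) _
    have hs2 : Real.sqrt 2 ≤ (3:ℝ)/2 := by
      nlinarith [Real.sq_sqrt (by norm_num : (0:ℝ) ≤ 2), Real.sqrt_nonneg 2]
    have hsL2 : (7:ℝ)/10 ≤ Real.sqrt L := by
      have : Real.sqrt ((1:ℝ)/2) ≤ Real.sqrt L := Real.sqrt_le_sqrt hL2
      nlinarith [Real.sq_sqrt (by norm_num : (0:ℝ) ≤ (1:ℝ)/2), Real.sqrt_nonneg ((1:ℝ)/2),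
        Real.sqrt_nonneg L]
    have hKey : Real.sqrt 2 * Real.sqrt L + 4 ≤ 10 * Real.sqrt L := by
      nlinarith [Real.sqrt_nonneg L, Real.sqrt_nonneg 2]
    have hKδ : 0 ≤ K * δ := by positivity
    calc M * δ + 4 * (K * δ) = (K * δ) * (Real.sqrt 2 * Real.sqrt L + 4) := by
          rw [hM_def, hsL]; ring
      _ ≤ (K * δ) * (10 * Real.sqrt L) := mul_le_mul_of_nonneg_left hKey hKδ
      _ = 10 * K * δ * Real.sqrt L := by ring
  calc |(∫ x, ⟪β, x⟫ ∂Q) - ∫ x, ⟪β, x⟫ ∂(R)| = |(∫ x, f x ∂Q) - ∫ x, f x ∂(R)| := rfl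
    _ ≤ M * δ + 4 * (K * δ) := hmain
    _ ≤ 10 * K * δ * Real.sqrt L := hfinal
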